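/- For the prototype system ẋ = εx − xy, ẏ = −y + x², consider the approximation φ(x,ε) = x²/(1 + 2ε) + 2x⁴/((1 + 2ε)²(1 + 4ε)), which is well defined for |ε| < 1/4. Then there exist K > 0 and δ > 0 such that the residual satisfies |(H_ex φ)(x,ε)| ≤ K|x|⁶ whenever |x| ≤ δ and |ε| ≤ 1/8; that is, φ satisfies the invariance equation to a residual O(x⁶), uniformly for ε in a neighbourhood of 0. -/
import Mathlib


/-- Residual operator for the prototype system `ẋ = εx − xy`, `ẏ = −y + x²`:
`(H_ex φ)(x,ε) = (∂φ/∂x)(x,ε)·x·(ε − φ(x,ε)) + φ(x,ε) − x²`. -/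
noncomputable def Hex (φ : ℝ → ℝ → ℝ) (x ε : ℝ) : ℝ :=
  deriv (fun x' => φ x' ε) x * x * (ε - φ x ε) + φ x ε - x ^ 2

set_option maxHeartbeats 1600000 in
theorem residual_of_resummed_approximation :
    ∃ K > (0 : ℝ), ∃ δ > (0 : ℝ), ∀ x ε : ℝ, |x| ≤ δ → |ε| ≤ 1 / 8 →
      |Hex (fun x ε => x ^ 2 / (1 + 2 * ε)
        + 2 * x ^ 4 / ((1 + 2 * ε) ^ 2 * (1 + 4 * ε))) x ε| ≤ K * |x| ^ 6 := by
  refine ⟨1000, by norm_num, 1, by norm_num, fun x ε hx hε => ?_⟩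
  have hε1 : -(1/8 : ℝ) ≤ ε := neg_le_of_abs_le hε
  have hε2 : ε ≤ 1/8 := le_of_abs_le hε
  set A := (1 + 2 * ε : ℝ) with hAdef
  set B := (1 + 4 * ε : ℝ) with hBdef
  have hA : (3/4 : ℝ) ≤ A := by simp [hAdef]; linarith
  have hB : (1/2 : ℝ) ≤ B := by simp [hBdef]; linarith
  have hA0 : A ≠ 0 := by positivity
  have hB0 : B ≠ 0 := by positivity
  -- compute the derivative
  have hderiv : deriv (fun x' : ℝ => x' ^ 2 / A + 2 * x' ^ 4 / (A ^ 2 * B)) x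
      = 2 * x / A + 8 * x ^ 3 / (A ^ 2 * B) := by
    have h1 : HasDerivAt (fun x' : ℝ => x' ^ 2 / A + 2 * x' ^ 4 / (A ^ 2 * B))
        ((2 * x ^ 1) / A + (2 * (4 * x ^ 3)) / (A ^ 2 * B)) x := by
      exact ((hasDerivAt_pow 2 x).div_const A).add
        (((hasDerivAt_pow 4 x).const_mul 2).div_const (A ^ 2 * B))
    have := h1.deriv
    rw [this]; ring
  have hHex : Hex (fun x ε => x ^ 2 / (1 + 2 * ε)
        + 2 * x ^ 4 / ((1 + 2 * ε) ^ 2 * (1 + 4 * ε))) x ε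
      = -(12 * x ^ 6) / (A ^ 3 * B) - 16 * x ^ 8 / (A ^ 4 * B ^ 2) := by
    simp only [Hex, ← hAdef, ← hBdef, hderiv]
    have hε' : ε = (A - 1) / 2 := by rw [hAdef]; ring
    have hBA : B = 2 * A - 1 := by rw [hBdef, hAdef]; ring
    field_simp
    rw [hε', hBA]
    ring
  rw [hHex]
  have hx6 : |x| ^ 6 = |x ^ 6| := by rw [abs_pow]
  have hApos : (0:ℝ) < A := by linarith
  have hBpos : (0:ℝ) < B := by linarith
  have hx2 : x ^ 2 ≤ 1 := by nlinarith [abs_nonneg x, sq_abs x]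
  have h6 : (0:ℝ) ≤ x ^ 6 := by positivity
  have h8 : (0:ℝ) ≤ x ^ 8 := by positivity
  have hx8le : x ^ 8 ≤ x ^ 6 := by nlinarith [h6, hx2]
  have hA3 : (27/64 : ℝ) ≤ A ^ 3 := by
    have := pow_le_pow_left₀ (by norm_num : (0:ℝ) ≤ 3/4) hA 3
    nlinarith [this]
  have hA4 : (81/256 : ℝ) ≤ A ^ 4 := by
    have := pow_le_pow_left₀ (by norm_num : (0:ℝ) ≤ 3/4) hA 4
    nlinarith [this]
  have hB2 : (1/4 : ℝ) ≤ B ^ 2 := by nlinarith [hB, hBpos]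
  have hAB3 : (27/128 : ℝ) ≤ A ^ 3 * B := by nlinarith [hA3, hB, hBpos]
  have hAB4 : (81/1024 : ℝ) ≤ A ^ 4 * B ^ 2 := by nlinarith [hA4, hB2, hBpos]
  have hAB3pos : (0:ℝ) < A ^ 3 * B := by positivity
  have hAB4pos : (0:ℝ) < A ^ 4 * B ^ 2 := by positivity
  have t1 : |-(12 * x ^ 6) / (A ^ 3 * B)| ≤ 128/27 * 12 * x ^ 6 := by
    rw [abs_div, abs_neg, abs_of_nonneg (by positivity : (0:ℝ) ≤ 12 * x ^ 6),
      abs_of_pos hAB3pos, div_le_iff₀ hAB3pos]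
    nlinarith
  have t2 : |16 * x ^ 8 / (A ^ 4 * B ^ 2)| ≤ 1024/81 * 16 * x ^ 6 := by
    rw [abs_div, abs_of_nonneg (by positivity : (0:ℝ) ≤ 16 * x ^ 8),
      abs_of_pos hAB4pos, div_le_iff₀ hAB4pos]
    nlinarith
  have tri : |-(12 * x ^ 6) / (A ^ 3 * B) - 16 * x ^ 8 / (A ^ 4 * B ^ 2)|
      ≤ |-(12 * x ^ 6) / (A ^ 3 * B)| + |16 * x ^ 8 / (A ^ 4 * B ^ 2)| := by
    rw [sub_eq_add_neg]
    exact (abs_add_le _ _).trans (by rw [abs_neg])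
  rw [hx6, abs_of_nonneg h6]
  linarith [tri, t1, t2]
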